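/- Let λ ∈ ℝ, T ∈ (0,∞], and let u, m : [0,T) × S¹ → ℝ be C¹ functions (with no assumed relation between m and u) satisfying the transport law m_t + u m_θ + λ u_θ m = 0 on [0,T) × S¹. Suppose the Lagrangian flow η of u is defined on [0,T) × S¹, is C¹ in (t,θ), and satisfies η_θ(t,θ) > 0. Then for every t ∈ [0,T) and θ ∈ S¹, η_θ(t,θ)^λ · m(t, η(t,θ)) = m(0,θ). -/

import Mathlib

open Set Filter Topology intervalIntegral MeasureTheory

section aux
open Set Filter Topology

/-- Chain rule along a curve, from continuous partial θ-derivative (via MVT). -/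
lemma chain_along_curve {J : Set ℝ} {m mt mθ : ℝ → ℝ → ℝ} {ψ : ℝ → ℝ} {t v : ℝ}
    (hψ : HasDerivWithinAt ψ v J t)
    (hmtd : HasDerivWithinAt (fun s => m s (ψ t)) (mt t (ψ t)) J t)
    (hmθd : ∀ s ∈ J, ∀ y : ℝ, HasDerivAt (m s) (mθ s y) y)
    (hmθc : ContinuousWithinAt (fun p : ℝ × ℝ => mθ p.1 p.2) (J ×ˢ univ) (t, ψ t)) :
    HasDerivWithinAt (fun s => m s (ψ s)) (mt t (ψ t) + mθ t (ψ t) * v) J t := by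
  have key : ∀ s ∈ J, ∃ c : ℝ, |c - ψ t| ≤ |ψ s - ψ t| ∧
      mθ s c * (ψ s - ψ t) = m s (ψ s) - m s (ψ t) := by
    intro s hs
    rcases eq_or_ne (ψ s) (ψ t) with h | h
    · exact ⟨ψ t, by simp [h], by simp [h]⟩
    rcases lt_or_gt_of_ne h with hlt | hgt
    · obtain ⟨c, hc, hc2⟩ := exists_hasDerivAt_eq_slope (m s) (mθ s) hlt
        (fun y _ => (hmθd s hs y).continuousAt.continuousWithinAt)
        (fun y _ => hmθd s hs y)
      refine ⟨c, ?_, ?_⟩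
      · rw [abs_sub_comm (ψ s) (ψ t)]
        rw [abs_of_neg (by linarith [hc.1, hc.2] : c - ψ t < 0),
          abs_of_pos (by linarith : (0:ℝ) < ψ t - ψ s)]
        linarith [hc.1, hc.2]
      · have hne : ψ t - ψ s ≠ 0 := sub_ne_zero.mpr (ne_of_gt (by linarith))
        rw [hc2, div_mul_eq_mul_div, div_eq_iff hne]; ring
    · obtain ⟨c, hc, hc2⟩ := exists_hasDerivAt_eq_slope (m s) (mθ s) hgt
        (fun y _ => (hmθd s hs y).continuousAt.continuousWithinAt)
        (fun y _ => hmθd s hs y)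
      refine ⟨c, ?_, ?_⟩
      · rw [abs_of_pos (by linarith [hc.1, hc.2] : (0:ℝ) < c - ψ t),
          abs_of_pos (by linarith : (0:ℝ) < ψ s - ψ t)]
        linarith [hc.1, hc.2]
      · have hne : ψ s - ψ t ≠ 0 := sub_ne_zero.mpr (ne_of_gt (by linarith))
        rw [hc2, div_mul_cancel₀ _ hne]
  classical
  set ξ : ℝ → ℝ := fun s => if hs : s ∈ J then Classical.choose (key s hs) else ψ t with hξdef
  have hξ1 : ∀ s (hs : s ∈ J), |ξ s - ψ t| ≤ |ψ s - ψ t| := by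
    intro s hs; rw [hξdef]; simp only [dif_pos hs]
    exact (Classical.choose_spec (key s hs)).1
  have hξ2 : ∀ s (hs : s ∈ J), mθ s (ξ s) * (ψ s - ψ t) = m s (ψ s) - m s (ψ t) := by
    intro s hs; rw [hξdef]; simp only [dif_pos hs]
    exact (Classical.choose_spec (key s hs)).2
  have hψc : Tendsto ψ (𝓝[J \ {t}] t) (𝓝 (ψ t)) :=
    hψ.continuousWithinAt.mono_left (nhdsWithin_mono t diff_subset)
  have hξc : Tendsto ξ (𝓝[J \ {t}] t) (𝓝 (ψ t)) := by
    rw [tendsto_iff_dist_tendsto_zero]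
    apply squeeze_zero' (.of_forall fun s => dist_nonneg)
    · filter_upwards [self_mem_nhdsWithin] with s hs
      have := hξ1 s hs.1
      simpa [Real.dist_eq] using this
    · have : Tendsto (fun s => dist (ψ s) (ψ t)) (𝓝[J \ {t}] t) (𝓝 (dist (ψ t) (ψ t))) :=
        hψc.dist tendsto_const_nhds
      simpa [Real.dist_eq] using this
  have hpair : Tendsto (fun s => ((s, ξ s) : ℝ × ℝ)) (𝓝[J \ {t}] t) (𝓝[J ×ˢ univ] (t, ψ t)) := by
    rw [tendsto_nhdsWithin_iff]
    constructor
    · exact (tendsto_id.mono_left nhdsWithin_le_nhds).prodMk_nhds hξc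
    · filter_upwards [self_mem_nhdsWithin] with s hs
      exact ⟨hs.1, mem_univ _⟩
  have hmθlim : Tendsto (fun s => mθ s (ξ s)) (𝓝[J \ {t}] t) (𝓝 (mθ t (ψ t))) :=
    hmθc.tendsto.comp hpair
  have hslopeψ : Tendsto (slope ψ t) (𝓝[J \ {t}] t) (𝓝 v) :=
    hasDerivWithinAt_iff_tendsto_slope.mp hψ
  have hφ : HasDerivWithinAt (fun s => m s (ψ s) - m s (ψ t)) (mθ t (ψ t) * v) J t := by
    rw [hasDerivWithinAt_iff_tendsto_slope]
    apply (hmθlim.mul hslopeψ).congr'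
    filter_upwards [self_mem_nhdsWithin] with s hs
    have hs1 := hs.1
    have hsne : s ≠ t := by
      intro he; exact hs.2 (by simp [he])
    have h2 := hξ2 s hs1
    have hne : s - t ≠ 0 := sub_ne_zero.mpr hsne
    simp only [slope_def_field]
    rw [sub_self, sub_zero, mul_div_assoc', div_eq_div_iff hne hne]
    linear_combination (s - t) * h2
  have h2 := hφ.add hmtd
  have heq : (fun s => m s (ψ s) - m s (ψ t) + m s (ψ t)) = fun s => m s (ψ s) :=
    funext fun s => by ring
  simp only [Pi.add_def] at h2; rw [heq, add_comm (mθ t (ψ t) * v) (mt t (ψ t))] at h2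
  exact h2

end aux

/-- vorticity transport formula η_θ^λ · m(t, η(t,θ)) = m(0,θ) for any
transport law m_t + u m_θ + λ u_θ m = 0, regardless of the relation between m and u. -/
theorem stmt_2 (lam : ℝ) (T : EReal) (hT : 0 < T)
    (J : Set ℝ) (hJ : J = {t : ℝ | 0 ≤ t ∧ (t : EReal) < T})
    (u m ut uθ mt mθ : ℝ → ℝ → ℝ)
    (huper : ∀ t ∈ J, ∀ θ : ℝ, u t (θ + 1) = u t θ)
    (hmper : ∀ t ∈ J, ∀ θ : ℝ, m t (θ + 1) = m t θ)
    -- u, m are C¹ in (t,θ): partial derivatives exist and are continuous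
    (hut : ∀ θ : ℝ, ∀ t ∈ J, HasDerivWithinAt (fun s => u s θ) (ut t θ) J t)
    (huθ : ∀ t ∈ J, ∀ θ : ℝ, HasDerivAt (u t) (uθ t θ) θ)
    (hmt : ∀ θ : ℝ, ∀ t ∈ J, HasDerivWithinAt (fun s => m s θ) (mt t θ) J t)
    (hmθ : ∀ t ∈ J, ∀ θ : ℝ, HasDerivAt (m t) (mθ t θ) θ)
    (hucont : ContinuousOn (fun p : ℝ × ℝ => u p.1 p.2) (J ×ˢ univ))
    (hmcont : ContinuousOn (fun p : ℝ × ℝ => m p.1 p.2) (J ×ˢ univ))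
    (hutcont : ContinuousOn (fun p : ℝ × ℝ => ut p.1 p.2) (J ×ˢ univ))
    (huθcont : ContinuousOn (fun p : ℝ × ℝ => uθ p.1 p.2) (J ×ˢ univ))
    (hmtcont : ContinuousOn (fun p : ℝ × ℝ => mt p.1 p.2) (J ×ˢ univ))
    (hmθcont : ContinuousOn (fun p : ℝ × ℝ => mθ p.1 p.2) (J ×ˢ univ))
    -- the transport law
    (hPDE : ∀ t ∈ J, ∀ θ : ℝ, mt t θ + u t θ * mθ t θ + lam * uθ t θ * m t θ = 0)
    -- the Lagrangian flow η, C¹ in (t,θ), with η_θ > 0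
    (η ηθ : ℝ → ℝ → ℝ)
    (hη0 : ∀ θ : ℝ, η 0 θ = θ)
    (hηt : ∀ θ : ℝ, ∀ t ∈ J, HasDerivWithinAt (fun s => η s θ) (u t (η t θ)) J t)
    (hηθ : ∀ t ∈ J, ∀ θ : ℝ, HasDerivAt (η t) (ηθ t θ) θ)
    (hηθcont : ContinuousOn (fun p : ℝ × ℝ => ηθ p.1 p.2) (J ×ˢ univ))
    (hηθpos : ∀ t ∈ J, ∀ θ : ℝ, 0 < ηθ t θ) :
    ∀ t ∈ J, ∀ θ : ℝ, ηθ t θ ^ lam * m t (η t θ) = m 0 θ := by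
  -- basic facts about J
  have hJ0 : (0:ℝ) ∈ J := by
    rw [hJ]; exact ⟨le_refl 0, by exact_mod_cast hT⟩
  have hJpos : ∀ t ∈ J, 0 ≤ t := by intro t ht; rw [hJ] at ht; exact ht.1
  have hJT : ∀ t ∈ J, (t : EReal) < T := by intro t ht; rw [hJ] at ht; exact ht.2
  have hJconv : Convex ℝ J := by
    rw [convex_iff_ordConnected]
    constructor
    intro x hx y hy z hz
    rw [hJ] at hy ⊢
    rw [hJ] at hx
    exact ⟨le_trans hx.1 hz.1, lt_of_le_of_lt (EReal.coe_le_coe_iff.mpr hz.2) hy.2⟩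
  have hIccJ : ∀ t ∈ J, Icc (0:ℝ) t ⊆ J := by
    intro t ht s hs
    rw [hJ]
    exact ⟨hs.1, lt_of_le_of_lt (EReal.coe_le_coe_iff.mpr hs.2) (hJT t ht)⟩
  -- for each t ∈ J, a slightly larger t' with Ico 0 t' ⊆ J
  have hbig : ∀ t ∈ J, ∃ t' : ℝ, t < t' ∧ Ico (0:ℝ) t' ⊆ J := by
    intro t ht
    obtain ⟨z, hz1, hz2⟩ := exists_between (hJT t ht)
    have hzt : z ≠ ⊤ := ne_top_of_lt hz2
    have hzb : z ≠ ⊥ := ne_bot_of_gt hz1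
    refine ⟨z.toReal, ?_, ?_⟩
    · rw [← EReal.coe_lt_coe_iff, EReal.coe_toReal hzt hzb]; exact hz1
    · intro s hs
      rw [hJ]
      refine ⟨hs.1, ?_⟩
      calc (s : EReal) < (z.toReal : EReal) := EReal.coe_lt_coe_iff.mpr hs.2
        _ = z := EReal.coe_toReal hzt hzb
        _ < T := hz2
  have hJnhds : ∀ t ∈ J, 0 < t → J ∈ 𝓝 t := by
    intro t ht htpos
    obtain ⟨t', ht'1, ht'2⟩ := hbig t ht
    exact Filter.mem_of_superset (Ioo_mem_nhds htpos ht'1) (fun s hs => ht'2 ⟨le_of_lt hs.1, hs.2⟩)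
  have hJnhds0 : J ∈ 𝓝[Ici (0:ℝ)] 0 := by
    obtain ⟨t', ht'1, ht'2⟩ := hbig 0 hJ0
    exact Filter.mem_of_superset (Ico_mem_nhdsGE_of_mem ⟨le_refl 0, ht'1⟩) ht'2
  have hJIci : J ⊆ Ici (0:ℝ) := fun s hs => hJpos s hs
  -- continuity of the flow in time
  have hηcont : ∀ θ : ℝ, ContinuousOn (fun s => η s θ) J :=
    fun θ s hs => (hηt θ s hs).continuousWithinAt
  -- curve continuity
  have hcurve : ∀ θ : ℝ, ContinuousOn (fun s => ((s, η s θ) : ℝ × ℝ)) J :=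
    fun θ => continuousOn_id.prodMk (hηcont θ)
  have hmapsto : ∀ θ : ℝ, MapsTo (fun s => ((s, η s θ) : ℝ × ℝ)) J (J ×ˢ univ) :=
    fun θ s hs => ⟨hs, mem_univ _⟩
  have hccont : ∀ θ : ℝ, ContinuousOn (fun s => u s (η s θ)) J :=
    fun θ => hucont.comp (hcurve θ) (hmapsto θ)
  -- Step B: integral identity for the flow
  have hB : ∀ t ∈ J, ∀ θ : ℝ, η t θ = θ + ∫ s in (0:ℝ)..t, u s (η s θ) := by
    intro t ht θ
    have h0t : (0:ℝ) ≤ t := hJpos t ht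
    have hder : ∀ x ∈ Ioo (0:ℝ) t, HasDerivWithinAt (fun s => η s θ) (u x (η x θ)) (Ioi x) x := by
      intro x hx
      have hxJ : x ∈ J := hIccJ t ht ⟨le_of_lt hx.1, le_of_lt hx.2⟩
      refine (hηt θ x hxJ).mono_of_mem_nhdsWithin ?_
      refine Filter.mem_of_superset (Ioo_mem_nhdsGT_of_mem ⟨le_refl x, hx.2⟩) ?_
      exact fun s hs => hIccJ t ht ⟨le_trans (le_of_lt hx.1) (le_of_lt hs.1), le_of_lt hs.2⟩
    have hint : IntervalIntegrable (fun s => u s (η s θ)) volume 0 t :=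
      ((hccont θ).mono (by rw [uIcc_of_le h0t]; exact hIccJ t ht)).intervalIntegrable
    have := intervalIntegral.integral_eq_sub_of_hasDeriv_right_of_le h0t
      ((hηcont θ).mono (hIccJ t ht)) hder hint
    rw [this, hη0 θ]; ring
  -- monotonicity of the flow in θ
  have hmono : ∀ s ∈ J, StrictMono (η s) := by
    intro s hs
    apply strictMono_of_deriv_pos
    intro θ
    rw [(hηθ s hs θ).deriv]
    exact hηθpos s hs θ
  -- fix t and θ₀ from now on
  intro t ht θ₀
  have h0t : (0:ℝ) ≤ t := hJpos t ht
  -- Step C: variational integral equation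
  have hC : ∀ t ∈ J, ηθ t θ₀ = 1 + ∫ s in (0:ℝ)..t, uθ s (η s θ₀) * ηθ s θ₀ := by
    intro t ht
    have h0t : (0:ℝ) ≤ t := hJpos t ht
    have hIoc : uIoc (0:ℝ) t ⊆ J := by
      rw [uIoc_of_le h0t]; exact fun s hs => hIccJ t ht ⟨le_of_lt hs.1, hs.2⟩
    -- bounds
    obtain ⟨M2, hM2⟩ := (isCompact_Icc.prod isCompact_Icc).exists_bound_of_continuousOn
      (hηθcont.mono (fun p hp => ⟨hIccJ t ht hp.1, mem_univ _⟩) :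
        ContinuousOn _ (Icc (0:ℝ) t ×ˢ Icc (θ₀ - 1) (θ₀ + 1)))
    obtain ⟨C1, hC1⟩ := isCompact_Icc.exists_bound_of_continuousOn
      ((hηcont (θ₀ - 1)).mono (hIccJ t ht))
    obtain ⟨C2, hC2⟩ := isCompact_Icc.exists_bound_of_continuousOn
      ((hηcont (θ₀ + 1)).mono (hIccJ t ht))
    set R : ℝ := max C1 C2 with hR
    have hηbound : ∀ s ∈ Icc (0:ℝ) t, ∀ θ ∈ Metric.ball θ₀ 1, η s θ ∈ Icc (-R) R := by
      intro s hs θ hθ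
      rw [Metric.mem_ball, Real.dist_eq, abs_lt] at hθ
      have hsJ : s ∈ J := hIccJ t ht hs
      have hmle : η s (θ₀ - 1) ≤ η s θ := (hmono s hsJ).monotone (by linarith)
      have hmge : η s θ ≤ η s (θ₀ + 1) := (hmono s hsJ).monotone (by linarith)
      have h1 := hC1 s hs
      have h2 := hC2 s hs
      rw [Real.norm_eq_abs, abs_le] at h1 h2
      constructor
      · calc -R ≤ -C1 := by simp [hR]
          _ ≤ η s (θ₀ - 1) := h1.1
          _ ≤ η s θ := hmle
      · calc η s θ ≤ η s (θ₀ + 1) := hmge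
          _ ≤ C2 := h2.2
          _ ≤ R := le_max_right _ _
    obtain ⟨M1, hM1⟩ := (isCompact_Icc.prod isCompact_Icc).exists_bound_of_continuousOn
      (huθcont.mono (fun p hp => ⟨hIccJ t ht hp.1, mem_univ _⟩) :
        ContinuousOn _ (Icc (0:ℝ) t ×ˢ Icc (-R) R))
    have hM1nonneg : 0 ≤ M1 := by
      have h00 : ((0:ℝ), (0:ℝ) - 0) ∈ Icc (0:ℝ) t ×ˢ Icc (-R) R → True := fun _ => trivial
      have hRnn : 0 ≤ R := le_trans (norm_nonneg _) (le_trans (hC1 0 ⟨le_refl 0, h0t⟩) (le_max_left _ _))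
      exact le_trans (norm_nonneg _) (hM1 ((0:ℝ), (0:ℝ)) ⟨⟨le_refl 0, h0t⟩, ⟨neg_nonpos.mpr hRnn, hRnn⟩⟩)
    have hM2nonneg : 0 ≤ M2 :=
      le_trans (norm_nonneg _) (hM2 ((0:ℝ), θ₀) ⟨⟨le_refl 0, h0t⟩, ⟨by linarith, by linarith⟩⟩)
    -- derivative of G by dominated convergence
    have hdom := intervalIntegral.hasDerivAt_integral_of_dominated_loc_of_deriv_le
      (F := fun θ s => u s (η s θ)) (F' := fun θ s => uθ s (η s θ) * ηθ s θ)
      (x₀ := θ₀) (a := (0:ℝ)) (b := t) (μ := volume) (bound := fun _ => M1 * M2)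
      (Metric.ball_mem_nhds θ₀ one_pos)
      (Filter.Eventually.of_forall (fun θ => by
        apply ContinuousOn.aestronglyMeasurable _ measurableSet_uIoc
        exact (hccont θ).mono hIoc))
      (((hccont θ₀).mono (by rw [uIcc_of_le h0t]; exact hIccJ t ht)).intervalIntegrable)
      (by
        apply ContinuousOn.aestronglyMeasurable _ measurableSet_uIoc
        apply ContinuousOn.mul
        · exact (huθcont.comp (hcurve θ₀) (hmapsto θ₀)).mono hIoc
        · exact ((hηθcont.comp (continuousOn_id.prodMk continuousOn_const)
            (fun s hs => ⟨hs, mem_univ _⟩)).mono hIoc))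
      (Filter.Eventually.of_forall (fun s hs θ hθ => by
        have hsIcc : s ∈ Icc (0:ℝ) t := by
          rw [uIoc_of_le h0t] at hs; exact ⟨le_of_lt hs.1, hs.2⟩
        have hθIcc : θ ∈ Icc (θ₀ - 1) (θ₀ + 1) := by
          rw [Metric.mem_ball, Real.dist_eq, abs_lt] at hθ
          constructor <;> linarith
        rw [norm_mul]
        refine mul_le_mul (hM1 (s, η s θ) ⟨hsIcc, hηbound s hsIcc θ hθ⟩)
          (hM2 (s, θ) ⟨hsIcc, hθIcc⟩) (norm_nonneg _) hM1nonneg))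
      (intervalIntegrable_const)
      (Filter.Eventually.of_forall (fun s hs θ _ => by
        have hsJ : s ∈ J := hIoc hs
        exact HasDerivAt.comp θ (huθ s hsJ (η s θ)) (hηθ s hsJ θ)))
    -- identify the two derivatives of G
    have hGder : HasDerivAt (fun θ => ∫ s in (0:ℝ)..t, u s (η s θ)) (ηθ t θ₀ - 1) θ₀ := by
      have hGeq : (fun θ => ∫ s in (0:ℝ)..t, u s (η s θ)) = fun θ => η t θ - θ :=
        funext fun θ => by rw [hB t ht θ]; ring
      rw [hGeq]
      exact (hηθ t ht θ₀).sub (hasDerivAt_id θ₀)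
    have := hdom.2.unique hGder
    linarith [this]
  -- Step D: t-derivative of ηθ
  set bfun : ℝ → ℝ := fun s => uθ s (η s θ₀) * ηθ s θ₀ with hbdef
  have hbcont : ContinuousOn bfun J := by
    apply ContinuousOn.mul
    · exact huθcont.comp (hcurve θ₀) (hmapsto θ₀)
    · exact hηθcont.comp (continuousOn_id.prodMk continuousOn_const) (fun s hs => ⟨hs, mem_univ _⟩)
  have hD : ∀ t ∈ J, HasDerivWithinAt (fun s => ηθ s θ₀) (bfun t) J t := by
    intro t ht
    have h0t : (0:ℝ) ≤ t := hJpos t ht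
    have hΦ : HasDerivWithinAt (fun r => 1 + ∫ s in (0:ℝ)..r, bfun s) (bfun t) J t := by
      rcases eq_or_lt_of_le h0t with h0 | h0
      · -- t = 0
        subst h0
        obtain ⟨t', ht'1, ht'2⟩ := hbig 0 hJ0
        have hJgt : J ∈ 𝓝[Ioi (0:ℝ)] 0 :=
          Filter.mem_of_superset (Ioo_mem_nhdsGT_of_mem ⟨le_refl 0, ht'1⟩)
            (fun s hs => ht'2 ⟨le_of_lt hs.1, hs.2⟩)
        have hmeas : StronglyMeasurableAtFilter bfun (𝓝[Ioi (0:ℝ)] 0) volume := by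
          refine ⟨Ico (0:ℝ) t', ?_, ?_⟩
          · exact nhdsWithin_mono 0 Ioi_subset_Ici_self (Ico_mem_nhdsGE_of_mem ⟨le_refl 0, ht'1⟩)
          · exact ContinuousOn.aestronglyMeasurable (hbcont.mono ht'2) measurableSet_Ico
        have hcw : ContinuousWithinAt bfun (Ioi (0:ℝ)) 0 :=
          (hbcont 0 hJ0).mono_of_mem_nhdsWithin hJgt
        have := intervalIntegral.integral_hasDerivWithinAt_right (s := Ici (0:ℝ)) (t := Ioi (0:ℝ))
          (IntervalIntegrable.refl) hmeas hcw
        simpa [Pi.add_def] using ((hasDerivWithinAt_const (0:ℝ) J (1:ℝ)).add (this.mono hJIci))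
      · -- 0 < t
        have hJt : J ∈ 𝓝 t := hJnhds t ht h0
        obtain ⟨t', ht'1, ht'2⟩ := hbig t ht
        have hmeas : StronglyMeasurableAtFilter bfun (𝓝 t) volume := by
          refine ⟨Ioo (0:ℝ) t', IsOpen.mem_nhds isOpen_Ioo ⟨h0, ht'1⟩, ?_⟩
          refine ContinuousOn.aestronglyMeasurable (hbcont.mono ?_) measurableSet_Ioo
          exact fun s hs => ht'2 ⟨le_of_lt hs.1, hs.2⟩
        have hint : IntervalIntegrable bfun volume 0 t :=
          (hbcont.mono (by rw [uIcc_of_le h0t]; exact hIccJ t ht)).intervalIntegrable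
        have hca : ContinuousAt bfun t := (hbcont t ht).continuousAt hJt
        have := intervalIntegral.integral_hasDerivAt_right hint hmeas hca
        simpa [Pi.add_def] using ((hasDerivWithinAt_const t J (1:ℝ)).add this.hasDerivWithinAt)
    refine hΦ.congr (fun s hs => ?_) ?_
    · rw [hC s hs]
    · rw [hC t ht]
  -- Step E: t-derivative of m along the flow
  have hE : ∀ t ∈ J, HasDerivWithinAt (fun s => m s (η s θ₀))
      (mt t (η t θ₀) + mθ t (η t θ₀) * u t (η t θ₀)) J t := by
    intro t ht
    exact chain_along_curve (hηt θ₀ t ht) (hmt (η t θ₀) t ht) hmθ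
      (hmθcont (t, η t θ₀) ⟨ht, mem_univ _⟩)
  -- Step F: the conserved quantity
  set E : ℝ → ℝ := fun s => ηθ s θ₀ ^ lam * m s (η s θ₀) with hEdef
  have hEder : ∀ t ∈ J, HasDerivWithinAt E 0 J t := by
    intro t ht
    have hpos := hηθpos t ht θ₀
    have h1 : HasDerivWithinAt (fun s => ηθ s θ₀ ^ lam)
        (bfun t * lam * ηθ t θ₀ ^ (lam - 1)) J t :=
      (hD t ht).rpow_const (Or.inl (ne_of_gt hpos))
    have h2 := (h1.mul (hE t ht))
    have hkey : bfun t * lam * ηθ t θ₀ ^ (lam - 1) * m t (η t θ₀) +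
        ηθ t θ₀ ^ lam * (mt t (η t θ₀) + mθ t (η t θ₀) * u t (η t θ₀)) = 0 := by
      have hpde := hPDE t ht (η t θ₀)
      have hmtval : mt t (η t θ₀) + mθ t (η t θ₀) * u t (η t θ₀) =
          -(lam * uθ t (η t θ₀) * m t (η t θ₀)) := by linarith
      rw [hmtval, hbdef]
      have hrpow : ηθ t θ₀ ^ (lam - 1) * ηθ t θ₀ = ηθ t θ₀ ^ lam := by
        rw [← Real.rpow_add_one (ne_of_gt hpos) (lam - 1)]
        norm_num
      calc uθ t (η t θ₀) * ηθ t θ₀ * lam * ηθ t θ₀ ^ (lam - 1) * m t (η t θ₀) +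
            ηθ t θ₀ ^ lam * -(lam * uθ t (η t θ₀) * m t (η t θ₀))
          = lam * uθ t (η t θ₀) * m t (η t θ₀) *
            (ηθ t θ₀ ^ (lam - 1) * ηθ t θ₀ - ηθ t θ₀ ^ lam) := by ring
        _ = 0 := by rw [hrpow]; ring
    rw [← hkey]
    exact h2
  -- Step G: E is constant on J
  have hconst : E t = E 0 := by
    have := hJconv.norm_image_sub_le_of_norm_hasDerivWithin_le (C := 0)
      (f' := fun _ => (0:ℝ)) (fun s hs => hEder s hs) (fun s _ => by simp) hJ0 ht
    simp only [zero_mul, norm_le_zero_iff, sub_eq_zero] at this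
    exact this
  have hηθ0 : ηθ 0 θ₀ = 1 := by
    have hid : η 0 = fun x => x := funext hη0
    have := hηθ 0 hJ0 θ₀
    rw [hid] at this
    exact this.unique (hasDerivAt_id θ₀)
  have : E 0 = m 0 θ₀ := by
    rw [hEdef]
    simp only [hηθ0, hη0, Real.one_rpow, one_mul]
  rw [hEdef] at hconst
  simp only at hconst
  rw [hconst, hηθ0, hη0, Real.one_rpow, one_mul]
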